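/- Let L, ν be natural numbers with ν+1 < L, h ∈ ℂ^L, f ∈ ℂ^{ν+1}, N0 > 0, σ ∈ (0,1], and assume F(ω) ≠ 0 for all ω ∈ [−π,π]. Define ε₁ and ε₂ as below and assume ε₂ is negative definite. Let b★ ∈ ℂ^{L−ν−1} be determined by conj(b★) = −ε₂⁻¹·ε₁ (componentwise), let B★(ω) = Σ_{j=0}^{L−ν−2} (b★)_j e^{iω(ν+1+j)}, and let W★(ω) = conj(H(ω))·(1+|F(ω)|² + σ·conj(F(ω))·B★(ω))/(conj(F(ω))·(N0+|H(ω)|²)). Then I_LB(W★,F,B★) = J(F) − ε₁†·ε₂⁻¹·ε₁, where J(F) = 1 + (1/2π)∫_{−π}^{π}[log(1+|F(ω)|²) + M(ω)·(1+|F(ω)|²)] dω; i.e., the upper bound J(F) − ε₁†ε₂⁻¹ε₁ on the mutual-information lower bound is attained by the optimal prefilter and feedback filter of Theorem 1. -/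

import Mathlib

open Complex Real MeasureTheory Matrix
open scoped ComplexOrder

/-- DTFT of the channel taps `h ∈ ℂ^L`. -/
noncomputable def Hdtft {L : ℕ} (h : Fin L → ℂ) (ω : ℝ) : ℂ :=
  ∑ ℓ : Fin L, h ℓ * Complex.exp (Complex.I * (ω : ℂ) * ((ℓ : ℕ) : ℂ))

/-- DTFT of the target-response taps `f ∈ ℂ^{ν+1}`. -/
noncomputable def Fdtft {ν : ℕ} (f : Fin (ν + 1) → ℂ) (ω : ℝ) : ℂ :=
  ∑ k : Fin (ν + 1), f k * Complex.exp (Complex.I * (ω : ℂ) * ((k : ℕ) : ℂ))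

/-- DTFT of the feedback-filter taps `b ∈ ℂ^{L−ν−1}` (supported on taps ν+1,…,L−1). -/
noncomputable def Bdtft {L ν : ℕ} (b : Fin (L - ν - 1) → ℂ) (ω : ℝ) : ℂ :=
  ∑ j : Fin (L - ν - 1), b j * Complex.exp (Complex.I * (ω : ℂ) * ((ν + 1 + (j : ℕ) : ℕ) : ℂ))

/-- The LMMSE kernel `M(ω) = −N0/(N0+|H(ω)|²)`. -/
noncomputable def Mker (N0 : ℝ) (H : ℝ → ℂ) (ω : ℝ) : ℝ :=
  -N0 / (N0 + ‖H ω‖ ^ 2)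

/-- `M̃(ω) = σ²(1+M(ω)) − σ`. -/
noncomputable def Mtker (N0 σ : ℝ) (H : ℝ → ℂ) (ω : ℝ) : ℝ :=
  σ ^ 2 * (1 + Mker N0 H ω) - σ

/-- The exponential vector `φ(ω) = (e^{iω(ν+1)},…,e^{iω(L−1)})ᵀ`. -/
noncomputable def phiVec (L ν : ℕ) (j : Fin (L - ν - 1)) (ω : ℝ) : ℂ :=
  Complex.exp (Complex.I * (ω : ℂ) * ((ν + 1 + (j : ℕ) : ℕ) : ℂ))

/-- The vector `ε₁ = (σ/2π)∫ M conj(F) φ dω`. -/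
noncomputable def eps1 (L ν : ℕ) (N0 σ : ℝ) (H F : ℝ → ℂ) (j : Fin (L - ν - 1)) : ℂ :=
  ((σ / (2 * π) : ℝ) : ℂ) *
    ∫ ω in (-π)..π, ((Mker N0 H ω : ℝ) : ℂ) * (starRingEnd ℂ) (F ω) * phiVec L ν j ω

/-- The matrix `ε₂ = (1/2π)∫ (M̃|F|²/(1+|F|²)) φ φ† dω`. -/
noncomputable def eps2 (L ν : ℕ) (N0 σ : ℝ) (H F : ℝ → ℂ) :
    Matrix (Fin (L - ν - 1)) (Fin (L - ν - 1)) ℂ := fun j k =>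
  ((1 / (2 * π) : ℝ) : ℂ) *
    ∫ ω in (-π)..π,
      ((Mtker N0 σ H ω * ‖F ω‖ ^ 2 / (1 + ‖F ω‖ ^ 2) : ℝ) : ℂ) *
        (phiVec L ν j ω * (starRingEnd ℂ) (phiVec L ν k ω))

/-- The quantity `Λ(ω)` appearing in the MILB. -/
noncomputable def Lam (N0 σ : ℝ) (W H F B : ℝ → ℂ) (ω : ℝ) : ℝ :=
  ‖F ω * W ω‖ ^ 2 * (N0 + ‖H ω‖ ^ 2) +
    σ * ‖F ω * B ω‖ ^ 2 -
    2 * σ * ‖F ω‖ ^ 2 * (H ω * W ω * (starRingEnd ℂ) (B ω)).re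

/-- The mutual-information lower bound functional `I_LB(W,F,B)`. -/
noncomputable def ILB (N0 σ : ℝ) (W H F B : ℝ → ℂ) : ℝ :=
  (1 / (2 * π)) *
      ∫ ω in (-π)..π,
        (Real.log (1 + ‖F ω‖ ^ 2) - ‖F ω‖ ^ 2 -
          Lam N0 σ W H F B ω / (1 + ‖F ω‖ ^ 2)) +
    (1 / π) *
      ∫ ω in (-π)..π, ((starRingEnd ℂ) (F ω) * (W ω * H ω - (σ : ℂ) * B ω)).re

/-- `J(F) = 1 + (1/2π)∫ [log(1+|F|²) + M(1+|F|²)]`. -/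
noncomputable def Jfun (N0 : ℝ) (H F : ℝ → ℂ) : ℝ :=
  1 + (1 / (2 * π)) *
    ∫ ω in (-π)..π,
      (Real.log (1 + ‖F ω‖ ^ 2) + Mker N0 H ω * (1 + ‖F ω‖ ^ 2))


/-- The optimal prefilter `W★` of Theorem 1 (for a given feedback DTFT `B`). -/
noncomputable def Wstar (N0 σ : ℝ) (H F B : ℝ → ℂ) (ω : ℝ) : ℂ :=
  (starRingEnd ℂ) (H ω) *
      (1 + (‖F ω‖ ^ 2 : ℂ) + (σ : ℂ) * (starRingEnd ℂ) (F ω) * B ω) /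
    ((starRingEnd ℂ) (F ω) * ((N0 : ℂ) + (‖H ω‖ ^ 2 : ℂ)))

section Aux

lemma normSq_u (a σ : ℝ) (w : ℂ) :
    Complex.normSq (1 + (a:ℂ) + (σ:ℂ) * w) =
      (1+a)^2 + 2*(1+a)*σ*w.re + σ^2 * Complex.normSq w := by
  simp [Complex.normSq_apply, Complex.add_re, Complex.add_im, Complex.mul_re, Complex.mul_im]
  ring

lemma re_u_mul_conj (a σ : ℝ) (w : ℂ) :
    ((1 + (a:ℂ) + (σ:ℂ) * w) * (starRingEnd ℂ) w).re =
      (1+a)*w.re + σ * Complex.normSq w := by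
  simp [Complex.normSq_apply, Complex.add_re, Complex.add_im, Complex.mul_re, Complex.mul_im]
  ring

lemma key (N0 σ : ℝ) (hN0 : 0 < N0) (c H0 B0 W : ℂ) (hc : c ≠ 0)
    (hW : W = (starRingEnd ℂ) H0 *
        (1 + (‖c‖ ^ 2 : ℂ) + (σ:ℂ) * (starRingEnd ℂ) c * B0) /
      ((starRingEnd ℂ) c * ((N0:ℂ) + (‖H0‖ ^ 2 : ℂ)))) :
    Real.log (1 + ‖c‖ ^ 2) - ‖c‖ ^ 2 -
      (‖c * W‖ ^ 2 * (N0 + ‖H0‖ ^ 2) + σ * ‖c * B0‖ ^ 2 -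
        2 * σ * ‖c‖ ^ 2 * (H0 * W * (starRingEnd ℂ) B0).re) / (1 + ‖c‖ ^ 2)
      + 2 * ((starRingEnd ℂ) c * (W * H0 - (σ:ℂ) * B0)).re
    = (Real.log (1 + ‖c‖ ^ 2) +
        (-N0 / (N0 + ‖H0‖ ^ 2)) * (1 + ‖c‖ ^ 2)) + 1 +
      (2 * σ * (-N0 / (N0 + ‖H0‖ ^ 2)) * ((starRingEnd ℂ) c * B0).re +
        (σ^2 * (1 + -N0 / (N0 + ‖H0‖ ^ 2)) - σ) * ‖c‖ ^ 2 /
          (1 + ‖c‖ ^ 2) * ‖B0‖ ^ 2) := by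
  set a : ℝ := ‖c‖ ^ 2 with ha_def
  set S : ℝ := ‖H0‖ ^ 2 with hS_def
  set w : ℂ := (starRingEnd ℂ) c * B0 with hw_def
  set nB : ℝ := ‖B0‖ ^ 2 with hnB_def
  have ha0 : 0 < a := by rw [ha_def]; exact pow_pos (norm_pos_iff.mpr hc) 2
  have ha : (0:ℝ) < 1 + a := by positivity
  have hS0 : 0 ≤ S := by rw [hS_def]; positivity
  have hK : 0 < N0 + S := by positivity
  have hKne : (N0 + S) ≠ 0 := ne_of_gt hK
  have hKC : ((N0:ℂ) + (S:ℂ)) ≠ 0 := by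
    rw [← Complex.ofReal_add]
    exact_mod_cast Complex.ofReal_ne_zero.mpr hKne
  have hcc : (starRingEnd ℂ) c ≠ 0 := by simpa using hc
  have hnsc : Complex.normSq c = a := (Complex.sq_norm c).symm
  have hnsH : Complex.normSq H0 = S := (Complex.sq_norm H0).symm
  have hnsB : Complex.normSq B0 = nB := (Complex.sq_norm B0).symm
  have hccc : c * (starRingEnd ℂ) c = (a:ℂ) := by rw [Complex.mul_conj, hnsc]
  have hHH : H0 * (starRingEnd ℂ) H0 = (S:ℂ) := by rw [Complex.mul_conj, hnsH]
  have hK2 : (N0:ℂ) + H0 * (starRingEnd ℂ) H0 ≠ 0 := by rw [hHH]; exact hKC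
  set u : ℂ := 1 + (a:ℂ) + (σ:ℂ) * w with hu_def
  have hW' : W = (starRingEnd ℂ) H0 * u / ((starRingEnd ℂ) c * ((N0:ℂ) + (S:ℂ))) := by
    rw [hW]
    have h1 : ((‖c‖ : ℂ))^2 = ((a : ℝ) : ℂ) := by rw [ha_def]; push_cast; ring
    have h2 : ((‖H0‖ : ℂ))^2 = ((S : ℝ) : ℂ) := by rw [hS_def]; push_cast; ring
    rw [h1, h2, hu_def, hw_def]
    ring
  have hnw : Complex.normSq w = a * nB := by
    rw [hw_def, _root_.map_mul, Complex.normSq_conj, hnsc, hnsB]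
  set r : ℝ := w.re with hr_def
  have A1 : ‖c * W‖ ^ 2 = S * Complex.normSq u / (N0 + S)^2 := by
    rw [Complex.sq_norm, hW']
    rw [_root_.map_mul, Complex.normSq_div, _root_.map_mul, _root_.map_mul, Complex.normSq_conj,
      Complex.normSq_conj, hnsc, hnsH]
    have h3 : Complex.normSq ((N0:ℂ) + (S:ℂ)) = (N0 + S)^2 := by
      rw [← Complex.ofReal_add, Complex.normSq_ofReal]; ring
    rw [h3]
    field_simp
  have A2c : (a:ℂ) * (H0 * W * (starRingEnd ℂ) B0) =
      ((S:ℂ)/((N0:ℂ)+(S:ℂ))) * (u * (starRingEnd ℂ) w) := by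
    rw [hW', hw_def, _root_.map_mul, Complex.conj_conj, ← hccc, ← hHH]
    field_simp
  have A2 : a * (H0 * W * (starRingEnd ℂ) B0).re = S/(N0+S) * ((1+a)*r + σ*(a*nB)) := by
    have h4 := congrArg Complex.re A2c
    rw [Complex.re_ofReal_mul] at h4
    rw [h4]
    have h1 : ((S:ℂ)/((N0:ℂ)+(S:ℂ))) = (((S/(N0+S) : ℝ)):ℂ) := by push_cast; ring
    rw [h1, Complex.re_ofReal_mul, hu_def, re_u_mul_conj, hnw, hr_def]
  have A3c : (starRingEnd ℂ) c * (W * H0 - (σ:ℂ) * B0) =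
      ((S:ℂ)/((N0:ℂ)+(S:ℂ))) * u - (σ:ℂ) * w := by
    rw [hW', hw_def, ← hHH]
    field_simp
  have A3 : ((starRingEnd ℂ) c * (W * H0 - (σ:ℂ) * B0)).re =
      S/(N0+S) * (1 + a + σ*r) - σ*r := by
    rw [A3c]
    have h1 : ((S:ℂ)/((N0:ℂ)+(S:ℂ))) = (((S/(N0+S) : ℝ)):ℂ) := by push_cast; ring
    have hure : u.re = 1 + a + σ * r := by
      rw [hu_def]; simp [Complex.add_re, Complex.mul_re, hr_def]
    rw [Complex.sub_re, h1, Complex.re_ofReal_mul, hure]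
    have : ((σ:ℂ) * w).re = σ * r := by rw [Complex.re_ofReal_mul, hr_def]
    rw [this]
  have A4 : ‖c * B0‖ ^ 2 = a * nB := by
    rw [norm_mul, mul_pow, ← ha_def, ← hnB_def]
  rw [A1, A4, hu_def, normSq_u, hnw, ← hr_def]
  rw [show 2 * σ * a * (H0 * W * (starRingEnd ℂ) B0).re
      = 2 * σ * (a * (H0 * W * (starRingEnd ℂ) B0).re) from by ring, A2, A3]
  field_simp
  ring

lemma contH {L : ℕ} (h : Fin L → ℂ) : Continuous (Hdtft h) :=
  continuous_finset_sum _ fun _ _ => continuous_const.mul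
    (Complex.continuous_exp.comp
      ((continuous_const.mul Complex.continuous_ofReal).mul continuous_const))

lemma contF {ν : ℕ} (f : Fin (ν + 1) → ℂ) : Continuous (Fdtft f) :=
  continuous_finset_sum _ fun _ _ => continuous_const.mul
    (Complex.continuous_exp.comp
      ((continuous_const.mul Complex.continuous_ofReal).mul continuous_const))

lemma contB {L ν : ℕ} (b : Fin (L - ν - 1) → ℂ) : Continuous (Bdtft (L := L) (ν := ν) b) :=
  continuous_finset_sum _ fun _ _ => continuous_const.mul
    (Complex.continuous_exp.comp
      ((continuous_const.mul Complex.continuous_ofReal).mul continuous_const))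

lemma contPhi {L ν : ℕ} (j : Fin (L - ν - 1)) : Continuous (fun ω => phiVec L ν j ω) :=
  Complex.continuous_exp.comp
    ((continuous_const.mul Complex.continuous_ofReal).mul continuous_const)


lemma hT1_aux {n : ℕ} (M : ℝ → ℝ) (hM : Continuous M) (Fc : ℝ → ℂ) (hFc : Continuous Fc)
    (φ : Fin n → ℝ → ℂ) (hφ : ∀ j, Continuous (φ j)) (b : Fin n → ℂ) (E : Fin n → ℂ) (c : ℝ)
    (hE : ∀ j, E j = ((c : ℝ):ℂ) *
      ∫ ω in (-π)..π, ((M ω:ℝ):ℂ) * (starRingEnd ℂ) (Fc ω) * φ j ω) :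
    b ⬝ᵥ E = ((c:ℝ):ℂ) * ∫ ω in (-π)..π,
      ((M ω:ℝ):ℂ) * ((starRingEnd ℂ) (Fc ω) * (∑ j, b j * φ j ω)) := by
  have hint : ∀ j : Fin n, IntervalIntegrable
      (fun ω => b j * (((M ω:ℝ):ℂ) * (starRingEnd ℂ) (Fc ω) * φ j ω))
      MeasureTheory.volume (-π) π := fun j => by
    exact (continuous_const.mul (((Complex.continuous_ofReal.comp hM).mul
      (Complex.continuous_conj.comp hFc)).mul (hφ j))).intervalIntegrable _ _
  have e1 : ∀ j, b j * E j = ((c : ℝ):ℂ) *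
      ∫ ω in (-π)..π, b j * (((M ω:ℝ):ℂ) * (starRingEnd ℂ) (Fc ω) * φ j ω) := by
    intro j
    rw [hE j, intervalIntegral.integral_const_mul]
    ring
  show (∑ j, b j * E j) = _
  rw [Finset.sum_congr rfl fun j _ => e1 j, ← Finset.mul_sum,
    ← intervalIntegral.integral_finset_sum (fun j _ => hint j)]
  congr 1
  apply intervalIntegral.integral_congr
  intro ω _
  simp only [Finset.mul_sum]
  exact Finset.sum_congr rfl fun j _ => by ring

lemma hT2_aux {n : ℕ} (g : ℝ → ℝ) (hg : Continuous g) (φ : Fin n → ℝ → ℂ)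
    (hφ : ∀ j, Continuous (φ j)) (b : Fin n → ℂ) (Em : Matrix (Fin n) (Fin n) ℂ)
    (hEm : ∀ j k, Em j k = ((1/(2*π) : ℝ):ℂ) *
      ∫ ω in (-π)..π, ((g ω :ℝ):ℂ) * (φ j ω * (starRingEnd ℂ) (φ k ω))) :
    b ⬝ᵥ Em.mulVec (fun k => (starRingEnd ℂ) (b k)) =
      ((1/(2*π) : ℝ):ℂ) * ∫ ω in (-π)..π, ((g ω :ℝ):ℂ) *
        ((∑ j, b j * φ j ω) * (starRingEnd ℂ) (∑ k, b k * φ k ω)) := by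
  have hjk : ∀ j k : Fin n, IntervalIntegrable
      (fun ω => (b j * (starRingEnd ℂ) (b k)) *
        (((g ω :ℝ):ℂ) * (φ j ω * (starRingEnd ℂ) (φ k ω))))
      MeasureTheory.volume (-π) π := fun j k => by
    exact (continuous_const.mul ((Complex.continuous_ofReal.comp hg).mul
      ((hφ j).mul (Complex.continuous_conj.comp (hφ k))))).intervalIntegrable _ _
  have e2 : ∀ j k : Fin n, b j * (Em j k * (starRingEnd ℂ) (b k)) =
      ((1/(2*π) : ℝ):ℂ) * ∫ ω in (-π)..π, (b j * (starRingEnd ℂ) (b k)) *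
        (((g ω :ℝ):ℂ) * (φ j ω * (starRingEnd ℂ) (φ k ω))) := by
    intro j k
    rw [hEm j k, intervalIntegral.integral_const_mul]
    ring
  show (∑ j, b j * ∑ k, Em j k * (starRingEnd ℂ) (b k)) = _
  have step1 : (∑ j, b j * ∑ k, Em j k * (starRingEnd ℂ) (b k)) =
      ∑ j, ∑ k, b j * (Em j k * (starRingEnd ℂ) (b k)) :=
    Finset.sum_congr rfl fun j _ => Finset.mul_sum _ _ _
  rw [step1, Finset.sum_congr rfl fun j _ => Finset.sum_congr rfl fun k _ => e2 j k]
  have step2 : (∑ j : Fin n, ∑ k : Fin n, ((1/(2*π) : ℝ):ℂ) *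
      ∫ ω in (-π)..π, (b j * (starRingEnd ℂ) (b k)) *
        (((g ω :ℝ):ℂ) * (φ j ω * (starRingEnd ℂ) (φ k ω)))) =
      ((1/(2*π) : ℝ):ℂ) * ∑ j : Fin n, ∫ ω in (-π)..π, ∑ k : Fin n,
        (b j * (starRingEnd ℂ) (b k)) *
        (((g ω :ℝ):ℂ) * (φ j ω * (starRingEnd ℂ) (φ k ω))) := by
    rw [Finset.mul_sum]
    refine Finset.sum_congr rfl fun j _ => ?_
    rw [← Finset.mul_sum, intervalIntegral.integral_finset_sum (fun k _ => hjk j k)]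
  have step3 : (∑ j : Fin n, ∫ ω in (-π)..π, ∑ k : Fin n,
      (b j * (starRingEnd ℂ) (b k)) *
        (((g ω :ℝ):ℂ) * (φ j ω * (starRingEnd ℂ) (φ k ω)))) =
      ∫ ω in (-π)..π, ∑ j : Fin n, ∑ k : Fin n,
      (b j * (starRingEnd ℂ) (b k)) *
        (((g ω :ℝ):ℂ) * (φ j ω * (starRingEnd ℂ) (φ k ω))) :=
    (intervalIntegral.integral_finset_sum
      (fun j _ => by exact (continuous_finset_sum _ fun k _ => continuous_const.mul
        ((Complex.continuous_ofReal.comp hg).mul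
          ((hφ j).mul (Complex.continuous_conj.comp (hφ k))))).intervalIntegrable _ _)).symm
  rw [step2, step3]
  congr 1
  apply intervalIntegral.integral_congr
  intro ω _
  beta_reduce
  rw [map_sum (starRingEnd ℂ) (fun k => b k * φ k ω) Finset.univ, Finset.sum_mul_sum, Finset.mul_sum]
  refine Finset.sum_congr rfl fun j _ => ?_
  rw [Finset.mul_sum]
  refine Finset.sum_congr rfl fun k _ => ?_
  rw [_root_.map_mul]
  ring

end Aux

set_option maxHeartbeats 1000000 in
/-- Attainment part of Theorem 1: the optimal prefilter `W★` together with the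
optimal feedback filter `b★` (with `conj(b★) = −ε₂⁻¹ε₁`) achieve the rate
`J(F) − ε₁†ε₂⁻¹ε₁` of equation (27). -/
theorem stmt18 (L ν : ℕ) (hLν : ν + 1 < L) (h : Fin L → ℂ) (f : Fin (ν + 1) → ℂ)
    (N0 σ : ℝ) (hN0 : 0 < N0) (hσ0 : 0 < σ) (hσ1 : σ ≤ 1)
    (hF : ∀ ω ∈ Set.Icc (-π) π, Fdtft f ω ≠ 0)
    (hNegDef : (-(eps2 L ν N0 σ (Hdtft h) (Fdtft f))).PosDef)
    (bstar : Fin (L - ν - 1) → ℂ)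
    (hbstar : ∀ j, (starRingEnd ℂ) (bstar j) =
      -((eps2 L ν N0 σ (Hdtft h) (Fdtft f))⁻¹.mulVec
          (eps1 L ν N0 σ (Hdtft h) (Fdtft f))) j) :
    ILB N0 σ
        (Wstar N0 σ (Hdtft h) (Fdtft f) (Bdtft (L := L) (ν := ν) bstar))
        (Hdtft h) (Fdtft f) (Bdtft (L := L) (ν := ν) bstar) =
      Jfun N0 (Hdtft h) (Fdtft f) -
        (star (eps1 L ν N0 σ (Hdtft h) (Fdtft f)) ⬝ᵥ
          (eps2 L ν N0 σ (Hdtft h) (Fdtft f))⁻¹.mulVec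
            (eps1 L ν N0 σ (Hdtft h) (Fdtft f))).re := by
  classical
  have hpi : (0:ℝ) < π := Real.pi_pos
  have hple : (-π) ≤ π := by linarith
  have huIcc : Set.uIcc (-π) π = Set.Icc (-π) π := Set.uIcc_of_le hple
  set H : ℝ → ℂ := Hdtft h with hHdef
  set F : ℝ → ℂ := Fdtft f with hFdef
  set B : ℝ → ℂ := Bdtft (L := L) (ν := ν) bstar with hBdef
  set W : ℝ → ℂ := Wstar N0 σ H F B with hWdef
  set E1 : Fin (L - ν - 1) → ℂ := eps1 L ν N0 σ H F with hE1def
  set E2 : Matrix (Fin (L - ν - 1)) (Fin (L - ν - 1)) ℂ := eps2 L ν N0 σ H F with hE2def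
  have hcH : Continuous H := contH h
  have hcF : Continuous F := contF f
  have hcB : Continuous B := contB bstar
  have hKpos : ∀ ω, 0 < N0 + ‖H ω‖^2 := fun ω => by positivity
  have h1a : ∀ ω, 0 < 1 + ‖F ω‖^2 := fun ω => by positivity
  have hcabsH : Continuous fun ω => ‖H ω‖^2 :=
    (continuous_norm.comp hcH).pow 2
  have hcabsF : Continuous fun ω => ‖F ω‖^2 :=
    (continuous_norm.comp hcF).pow 2
  have hcabsB : Continuous fun ω => ‖B ω‖^2 :=
    (continuous_norm.comp hcB).pow 2
  have hcK : Continuous fun ω => N0 + ‖H ω‖^2 := continuous_const.add hcabsH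
  have hc1a : Continuous fun ω => 1 + ‖F ω‖^2 := continuous_const.add hcabsF
  have hcM : Continuous (Mker N0 H) := by
    show Continuous fun ω => -N0 / (N0 + ‖H ω‖^2)
    exact continuous_const.div hcK fun ω => (hKpos ω).ne'
  have hcMt : Continuous (Mtker N0 σ H) := by
    show Continuous fun ω => σ^2 * (1 + Mker N0 H ω) - σ
    exact (continuous_const.mul (continuous_const.add hcM)).sub continuous_const
  have hcconjF : Continuous fun ω => (starRingEnd ℂ) (F ω) := Complex.continuous_conj.comp hcF
  have hcconjB : Continuous fun ω => (starRingEnd ℂ) (B ω) := Complex.continuous_conj.comp hcB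
  have hcg : Continuous fun ω =>
      Mtker N0 σ H ω * ‖F ω‖^2 / (1 + ‖F ω‖^2) :=
    (hcMt.mul hcabsF).div hc1a fun ω => (h1a ω).ne'
  have hKCne : ∀ ω, ((N0:ℂ) + ((‖H ω‖ : ℂ))^2) ≠ 0 := by
    intro ω
    have e : ((N0:ℂ) + ((‖H ω‖ : ℂ))^2) = ((N0 + ‖H ω‖^2 : ℝ) : ℂ) := by
      push_cast; ring
    rw [e]
    exact_mod_cast (hKpos ω).ne'
  have hcW : ContinuousOn W (Set.Icc (-π) π) := by
    show ContinuousOn (fun ω => (starRingEnd ℂ) (H ω) *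
        (1 + (‖F ω‖ ^ 2 : ℂ) + (σ:ℂ) * (starRingEnd ℂ) (F ω) * B ω) /
      ((starRingEnd ℂ) (F ω) * ((N0:ℂ) + (‖H ω‖ ^ 2 : ℂ)))) (Set.Icc (-π) π)
    apply ContinuousOn.div
    · apply Continuous.continuousOn
      exact (Complex.continuous_conj.comp hcH).mul
        ((continuous_const.add (((Complex.continuous_ofReal.comp
            (continuous_norm.comp hcF)).pow 2))).add
          ((continuous_const.mul hcconjF).mul hcB))
    · apply Continuous.continuousOn
      exact hcconjF.mul (continuous_const.add
        ((Complex.continuous_ofReal.comp (continuous_norm.comp hcH)).pow 2))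
    · intro ω hω
      exact mul_ne_zero (by simpa using hF ω hω) (hKCne ω)
  have hcLam : ContinuousOn (Lam N0 σ W H F B) (Set.Icc (-π) π) := by
    show ContinuousOn (fun ω => ‖F ω * W ω‖ ^ 2 * (N0 + ‖H ω‖ ^ 2) +
      σ * ‖F ω * B ω‖ ^ 2 -
      2 * σ * ‖F ω‖ ^ 2 * (H ω * W ω * (starRingEnd ℂ) (B ω)).re) (Set.Icc (-π) π)
    apply ContinuousOn.sub
    · apply ContinuousOn.add
      · exact (((continuous_norm.comp_continuousOn
          (hcF.continuousOn.mul hcW)).pow 2).mul hcK.continuousOn)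
      · exact (continuous_const.mul
          ((continuous_norm.comp (hcF.mul hcB)).pow 2)).continuousOn
    · exact ((continuous_const.mul hcabsF).continuousOn.mul
        (Complex.continuous_re.comp_continuousOn
          ((hcH.continuousOn.mul hcW).mul hcconjB.continuousOn)))
  have hcI1 : ContinuousOn (fun ω => Real.log (1 + ‖F ω‖ ^ 2) -
      ‖F ω‖ ^ 2 - Lam N0 σ W H F B ω / (1 + ‖F ω‖ ^ 2))
      (Set.Icc (-π) π) := by
    apply ContinuousOn.sub
    · exact ((hc1a.log fun ω => (h1a ω).ne').sub hcabsF).continuousOn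
    · exact hcLam.div hc1a.continuousOn fun ω _ => (h1a ω).ne'
  have hcI2 : ContinuousOn (fun ω =>
      ((starRingEnd ℂ) (F ω) * (W ω * H ω - (σ:ℂ) * B ω)).re) (Set.Icc (-π) π) :=
    Complex.continuous_re.comp_continuousOn
      (hcconjF.continuousOn.mul ((hcW.mul hcH.continuousOn).sub
        (continuous_const.mul hcB).continuousOn))
  have hintI1 : IntervalIntegrable (fun ω => Real.log (1 + ‖F ω‖ ^ 2) -
      ‖F ω‖ ^ 2 - Lam N0 σ W H F B ω / (1 + ‖F ω‖ ^ 2))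
      MeasureTheory.volume (-π) π := by
    apply ContinuousOn.intervalIntegrable; rw [huIcc]; exact hcI1
  have hintI2 : IntervalIntegrable (fun ω =>
      2 * ((starRingEnd ℂ) (F ω) * (W ω * H ω - (σ:ℂ) * B ω)).re)
      MeasureTheory.volume (-π) π := by
    apply ContinuousOn.intervalIntegrable; rw [huIcc]
    exact continuous_const.continuousOn.mul hcI2
  have hintJ : IntervalIntegrable (fun ω => Real.log (1 + ‖F ω‖ ^ 2) +
      Mker N0 H ω * (1 + ‖F ω‖ ^ 2)) MeasureTheory.volume (-π) π :=
    ((hc1a.log fun ω => (h1a ω).ne').add (hcM.mul hc1a)).intervalIntegrable _ _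
  have hintC1 : IntervalIntegrable (fun ω =>
      2 * σ * Mker N0 H ω * ((starRingEnd ℂ) (F ω) * B ω).re) MeasureTheory.volume (-π) π :=
    ((continuous_const.mul hcM).mul
      (Complex.continuous_re.comp (hcconjF.mul hcB))).intervalIntegrable _ _
  have hintC2 : IntervalIntegrable (fun ω =>
      Mtker N0 σ H ω * ‖F ω‖^2 / (1 + ‖F ω‖^2) *
        ‖B ω‖^2) MeasureTheory.volume (-π) π :=
    (hcg.mul hcabsB).intervalIntegrable _ _
  have keyEq : Set.EqOn
      (fun ω => (Real.log (1 + ‖F ω‖ ^ 2) - ‖F ω‖ ^ 2 -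
          Lam N0 σ W H F B ω / (1 + ‖F ω‖ ^ 2)) +
        2 * ((starRingEnd ℂ) (F ω) * (W ω * H ω - (σ:ℂ) * B ω)).re)
      (fun ω => ((Real.log (1 + ‖F ω‖ ^ 2) +
          Mker N0 H ω * (1 + ‖F ω‖ ^ 2)) + 1) +
        (2 * σ * Mker N0 H ω * ((starRingEnd ℂ) (F ω) * B ω).re +
          Mtker N0 σ H ω * ‖F ω‖^2 / (1 + ‖F ω‖^2) *
            ‖B ω‖^2))
      (Set.uIcc (-π) π) := by
    rw [huIcc]
    intro ω hω
    have hk := key N0 σ hN0 (F ω) (H ω) (B ω) (W ω) (hF ω hω) rfl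
    simp only [Lam, Mker, Mtker]
    linarith [hk]
  have hILB : ILB N0 σ W H F B =
      Jfun N0 H F + (1 / (2*π)) * ((∫ ω in (-π)..π,
          2 * σ * Mker N0 H ω * ((starRingEnd ℂ) (F ω) * B ω).re) +
        (∫ ω in (-π)..π, Mtker N0 σ H ω * ‖F ω‖^2 / (1 + ‖F ω‖^2) *
          ‖B ω‖^2)) := by
    have e0 : ILB N0 σ W H F B =
        (1 / (2*π)) * ∫ ω in (-π)..π,
          ((Real.log (1 + ‖F ω‖ ^ 2) - ‖F ω‖ ^ 2 -
            Lam N0 σ W H F B ω / (1 + ‖F ω‖ ^ 2)) +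
          2 * ((starRingEnd ℂ) (F ω) * (W ω * H ω - (σ:ℂ) * B ω)).re) := by
      have habst : ∀ A B : ℝ, 1/(2*π) * A + 1/π * B = 1/(2*π) * (A + 2*B) := by
        intro A B; field_simp
      have h1 : (∫ ω in (-π)..π,
          ((Real.log (1 + ‖F ω‖ ^ 2) - ‖F ω‖ ^ 2 -
            Lam N0 σ W H F B ω / (1 + ‖F ω‖ ^ 2)) +
          2 * ((starRingEnd ℂ) (F ω) * (W ω * H ω - (σ:ℂ) * B ω)).re)) =
          (∫ ω in (-π)..π, (Real.log (1 + ‖F ω‖ ^ 2) - ‖F ω‖ ^ 2 -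
            Lam N0 σ W H F B ω / (1 + ‖F ω‖ ^ 2))) +
          2 * ∫ ω in (-π)..π, ((starRingEnd ℂ) (F ω) * (W ω * H ω - (σ:ℂ) * B ω)).re := by
        rw [intervalIntegral.integral_add hintI1 hintI2,
          intervalIntegral.integral_const_mul]
      have hL : (∫ ω in (-π)..π,
          ((Real.log (1 + ‖F ω‖ ^ 2) - ‖F ω‖ ^ 2 -
            Lam N0 σ W H F B ω / (1 + ‖F ω‖ ^ 2)) +
          (1 / π) * ∫ ω in (-π)..π,
            ((starRingEnd ℂ) (F ω) * (W ω * H ω - (σ:ℂ) * B ω)).re)) =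
          (∫ ω in (-π)..π, (Real.log (1 + ‖F ω‖ ^ 2) - ‖F ω‖ ^ 2 -
            Lam N0 σ W H F B ω / (1 + ‖F ω‖ ^ 2))) +
          (π - -π) • ((1 / π) * ∫ ω in (-π)..π,
            ((starRingEnd ℂ) (F ω) * (W ω * H ω - (σ:ℂ) * B ω)).re) := by
        rw [intervalIntegral.integral_add hintI1 intervalIntegrable_const,
          intervalIntegral.integral_const]
      have habst3 : ∀ A C : ℝ, 1/(2*π) * (A + (π - -π) • ((1/π) * C)) =
          1/(2*π) * (A + 2*C) := by
        intro A C; rw [smul_eq_mul]; field_simp; ring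
      rw [ILB, hL, h1]
      exact habst3 _ _
    rw [e0, intervalIntegral.integral_congr keyEq]
    rw [intervalIntegral.integral_add (hintJ.add (intervalIntegrable_const))
      (hintC1.add hintC2)]
    rw [intervalIntegral.integral_add hintJ intervalIntegrable_const]
    rw [intervalIntegral.integral_add hintC1 hintC2]
    rw [intervalIntegral.integral_const]
    have habst2 : ∀ A C1 C2 : ℝ, 1/(2*π) * ((A + (π - -π) • (1:ℝ)) + (C1 + C2)) =
        (1 + 1 / (2*π) * A) + 1/(2*π)*(C1+C2) := by
      intro A C1 C2; rw [smul_eq_mul]; field_simp; ring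
    simp only [Jfun]
    exact habst2 _ _ _
  have hBphi : ∀ ω, B ω = ∑ j, bstar j * phiVec L ν j ω := fun ω => rfl
  -- first correction piece
  have hT1 : bstar ⬝ᵥ E1 = (((σ / (2*π) : ℝ)):ℂ) *
      ∫ ω in (-π)..π, ((Mker N0 H ω : ℝ) : ℂ) * ((starRingEnd ℂ) (F ω) * B ω) :=
    hT1_aux (Mker N0 H) hcM F hcF (phiVec L ν) (fun j => contPhi j) bstar E1 (σ/(2*π))
      (fun j => rfl)
  have hintMF : IntervalIntegrable
      (fun ω => ((Mker N0 H ω : ℝ) : ℂ) * ((starRingEnd ℂ) (F ω) * B ω))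
      MeasureTheory.volume (-π) π :=
    ((Complex.continuous_ofReal.comp hcM).mul (hcconjF.mul hcB)).intervalIntegrable _ _
  have hT1re : (bstar ⬝ᵥ E1).re =
      (σ / (2*π)) * ∫ ω in (-π)..π, Mker N0 H ω * ((starRingEnd ℂ) (F ω) * B ω).re := by
    rw [hT1, Complex.re_ofReal_mul]
    congr 1
    have hswap := Complex.reCLM.intervalIntegral_comp_comm hintMF
    simp only [Complex.reCLM_apply] at hswap
    rw [← hswap]
    apply intervalIntegral.integral_congr
    intro ω _
    beta_reduce
    rw [Complex.re_ofReal_mul]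
  -- second correction piece
  have hT2 : bstar ⬝ᵥ E2.mulVec (fun k => (starRingEnd ℂ) (bstar k)) =
      (((1/(2*π) : ℝ)):ℂ) * ∫ ω in (-π)..π,
        ((Mtker N0 σ H ω * ‖F ω‖ ^ 2 / (1 + ‖F ω‖ ^ 2) : ℝ) : ℂ) *
          (B ω * (starRingEnd ℂ) (B ω)) :=
    hT2_aux (fun ω => Mtker N0 σ H ω * ‖F ω‖ ^ 2 / (1 + ‖F ω‖ ^ 2))
      hcg (phiVec L ν) (fun j => contPhi j) bstar E2 (fun j k => rfl)
  have hintG : IntervalIntegrable (fun ω =>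
      ((Mtker N0 σ H ω * ‖F ω‖ ^ 2 / (1 + ‖F ω‖ ^ 2) : ℝ) : ℂ) *
        (B ω * (starRingEnd ℂ) (B ω))) MeasureTheory.volume (-π) π :=
    ((Complex.continuous_ofReal.comp hcg).mul (hcB.mul hcconjB)).intervalIntegrable _ _
  have hT2re : (bstar ⬝ᵥ E2.mulVec (fun k => (starRingEnd ℂ) (bstar k))).re =
      (1/(2*π)) * ∫ ω in (-π)..π,
        Mtker N0 σ H ω * ‖F ω‖^2 / (1 + ‖F ω‖^2) *
          ‖B ω‖^2 := by
    rw [hT2, Complex.re_ofReal_mul]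
    congr 1
    have hswap := Complex.reCLM.intervalIntegral_comp_comm hintG
    simp only [Complex.reCLM_apply] at hswap
    rw [← hswap]
    apply intervalIntegral.integral_congr
    intro ω _
    beta_reduce
    rw [Complex.mul_conj, ← Complex.ofReal_mul, Complex.ofReal_re,
      show ‖B ω‖^2 = Complex.normSq (B ω) from Complex.sq_norm _]
  -- matrix algebra
  have hE2unit : IsUnit E2.det := by
    have h1 : IsUnit (-E2) := hNegDef.isUnit
    have h2 : IsUnit E2 := by simpa using h1.neg
    exact (Matrix.isUnit_iff_isUnit_det _).mp h2
  have hmv : E2.mulVec (E2⁻¹.mulVec E1) = E1 := by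
    rw [Matrix.mulVec_mulVec, Matrix.mul_nonsing_inv _ hE2unit, Matrix.one_mulVec]
  have hdot1 : bstar ⬝ᵥ E2.mulVec (fun k => (starRingEnd ℂ) (bstar k)) = -(bstar ⬝ᵥ E1) := by
    have hc1 : (fun k => (starRingEnd ℂ) (bstar k)) = -(E2⁻¹.mulVec E1) := funext fun k => by
      rw [hbstar k]; rfl
    rw [hc1, Matrix.mulVec_neg, dotProduct_neg, hmv]
  have hRHS : (star E1 ⬝ᵥ E2⁻¹.mulVec E1).re = -((bstar ⬝ᵥ E1).re) := by
    have hv : E2⁻¹.mulVec E1 = fun k => -((starRingEnd ℂ) (bstar k)) := funext fun k => by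
      rw [hbstar k, neg_neg]
    have hs : star E1 ⬝ᵥ E2⁻¹.mulVec E1 = -((starRingEnd ℂ) (bstar ⬝ᵥ E1)) := by
      rw [hv]
      show (∑ k, (star E1) k * -((starRingEnd ℂ) (bstar k))) = _
      rw [show (starRingEnd ℂ) (bstar ⬝ᵥ E1) = ∑ k, (starRingEnd ℂ) (bstar k * E1 k) from
        map_sum _ _ _, ← Finset.sum_neg_distrib]
      refine Finset.sum_congr rfl fun k _ => ?_
      rw [_root_.map_mul]
      simp only [Pi.star_apply, Complex.star_def]
      ring
    rw [hs]
    simp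
  have hfin : (1 / (2*π)) * ((∫ ω in (-π)..π,
          2 * σ * Mker N0 H ω * ((starRingEnd ℂ) (F ω) * B ω).re) +
        (∫ ω in (-π)..π, Mtker N0 σ H ω * ‖F ω‖^2 / (1 + ‖F ω‖^2) *
          ‖B ω‖^2)) = -((star E1 ⬝ᵥ E2⁻¹.mulVec E1).re) := by
    have hc2 : (∫ ω in (-π)..π,
        2 * σ * Mker N0 H ω * ((starRingEnd ℂ) (F ω) * B ω).re) =
        (2 * σ) * ∫ ω in (-π)..π, Mker N0 H ω * ((starRingEnd ℂ) (F ω) * B ω).re := by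
      rw [show (fun ω => 2 * σ * Mker N0 H ω * ((starRingEnd ℂ) (F ω) * B ω).re) =
        (fun ω => (2 * σ) * (Mker N0 H ω * ((starRingEnd ℂ) (F ω) * B ω).re)) from
        funext fun ω => by ring]
      exact intervalIntegral.integral_const_mul _ _
    rw [hc2, hRHS, neg_neg]
    have hB2 : (1/(2*π)) * (∫ ω in (-π)..π, Mtker N0 σ H ω * ‖F ω‖^2 /
          (1 + ‖F ω‖^2) * ‖B ω‖^2) = -((bstar ⬝ᵥ E1).re) := by
      rw [← hT2re, hdot1]
      simp
    have hlin : ∀ X Y : ℝ, (1/(2*π)) * ((2*σ)*X + Y) =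
        2*((σ/(2*π))*X) + (1/(2*π))*Y := by intro X Y; ring
    rw [hlin, ← hT1re, hB2]
    ring
  rw [hILB, hfin]
  ring
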